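/- Let G be a finite group with trivial center Z(G) = 1 whose commutator subgroup [G,G] is isomorphic to the Klein four-group C2 × C2. If G is not supersolvable, then G is isomorphic to the alternating group A4. -/

import Mathlib

open scoped commutatorElement

/-- A finite group is supersolvable if it has a chain of subgroups, each normal in the
whole group, from the trivial subgroup to the whole group, with cyclic successive quotients. -/
def IsSupersolvable (G : Type*) [Group G] : Prop :=
  ∃ (n : ℕ) (s : Fin (n + 1) → Subgroup G) (hnorm : ∀ i, (s i).Normal),
    s 0 = ⊥ ∧ s (Fin.last n) = ⊤ ∧ Monotone s ∧
    ∀ i : Fin n,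
      IsCyclic ((s i.succ).map (@QuotientGroup.mk' G _ (s i.castSucc) (hnorm i.castSucc)))

theorem commutator_element_mem_commutator {G : Type*} [Group G] (g₁ g₂ : G) :
    ⁅g₁, g₂⁆ ∈ commutator G :=
  Subgroup.commutator_mem_commutator (Subgroup.mem_top g₁) (Subgroup.mem_top g₂)

/-- Two groups are isoclinic if there are compatible isomorphisms between their central
quotients and their commutator subgroups. -/
def Isoclinic (G H : Type*) [Group G] [Group H] : Prop :=
  ∃ (φ : G ⧸ Subgroup.center G ≃* H ⧸ Subgroup.center H)
    (ψ : commutator G ≃* commutator H),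
    ∀ (g₁ g₂ : G) (h₁ h₂ : H),
      φ (g₁ : G ⧸ Subgroup.center G) = (h₁ : H ⧸ Subgroup.center H) →
      φ (g₂ : G ⧸ Subgroup.center G) = (h₂ : H ⧸ Subgroup.center H) →
      (ψ ⟨⁅g₁, g₂⁆, commutator_element_mem_commutator g₁ g₂⟩ : H) = ⁅h₁, h₂⁆

private lemma int_units_cube (u : ℤˣ) (h : u^3 = 1) : u = 1 := by
  rcases Int.units_eq_one_or u with rfl|rfl
  · rfl
  · exact absurd h (by decide)

private def permCongrMulEquiv {α β : Type*} (e : α ≃ β) :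
    Equiv.Perm α ≃* Equiv.Perm β where
  toEquiv := Equiv.permCongr e
  map_mul' := fun f g => by
    ext x
    simp [Equiv.permCongr_apply]

set_option maxHeartbeats 2000000 in
private lemma aux_main (G : Type*) [Group G] [Finite G]
    (hZ : Subgroup.center G = ⊥) (a b c t : G)
    (ha1 : a ≠ 1) (hb1 : b ≠ 1) (hab1 : a ≠ b)
    (ha2 : a * a = 1) (hb2 : b * b = 1) (hco : a * b = b * a) (hc : a * b = c)
    (hcard4 : Nat.card (commutator G) = 4)
    (hV : ∀ v : G, v ∈ commutator G ↔ (v = 1 ∨ v = a ∨ v = b ∨ v = c))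
    (hta : t * a * t⁻¹ = b) (htb : t * b * t⁻¹ = c) (htc : t * c * t⁻¹ = a) :
    Nonempty (G ≃* alternatingGroup (Fin 4)) := by
  -- basic table
  have ainv : a⁻¹ = a := inv_eq_of_mul_eq_one_right ha2
  have binv : b⁻¹ = b := inv_eq_of_mul_eq_one_right hb2
  have hba : b * a = c := hco ▸ hc
  have hc1 : c ≠ 1 := by
    intro h; rw [← hc] at h
    exact hab1 (by rw [← ainv]; exact inv_eq_of_mul_eq_one_right h)
  have hca : c ≠ a := by
    intro h; rw [← hc] at h; apply hb1
    have := congrArg (fun x => a * x) h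
    simpa [← mul_assoc, ha2] using this
  have hcb : c ≠ b := by
    intro h; rw [← hba] at h; apply ha1
    have := congrArg (fun x => b * x) h
    simpa [← mul_assoc, hb2] using this
  have hc2 : c * c = 1 := by
    rw [← hc]; calc a * b * (a * b) = a * (b * a) * b := by group
    _ = a * (a * b) * b := by rw [hco]
    _ = (a * a) * (b * b) := by group
    _ = 1 := by rw [ha2, hb2, one_mul]
  have cinv : c⁻¹ = c := inv_eq_of_mul_eq_one_right hc2
  have hacb : a * c = b := by
    rw [← hc, ← mul_assoc, ha2, one_mul]
  have hcab2 : c * a = b := by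
    rw [← hba, mul_assoc, ha2, mul_one]
  have hbca : b * c = a := by
    rw [← hba, ← mul_assoc, hb2, one_mul]
  have hcba : c * b = a := by
    rw [← hc, mul_assoc, hb2, mul_one]
  -- memberships
  have mem1 : (1 : G) ∈ commutator G := (hV 1).2 (Or.inl rfl)
  have mema : a ∈ commutator G := (hV a).2 (Or.inr (Or.inl rfl))
  have memb : b ∈ commutator G := (hV b).2 (Or.inr (Or.inr (Or.inl rfl)))
  have memc : c ∈ commutator G := (hV c).2 (Or.inr (Or.inr (Or.inr rfl)))
  -- commutator subgroup is abelian (it is {1,a,b,c})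
  have Vcomm : ∀ v w : G, v ∈ commutator G → w ∈ commutator G → v * w = w * v := by
    intro v w hv hw
    rcases (hV v).1 hv with rfl|rfl|rfl|rfl <;>
      rcases (hV w).1 hw with rfl|rfl|rfl|rfl <;>
      simp only [one_mul, mul_one, ha2, hb2, hc2, hc, hba, hacb, hcab2, hbca, hcba, hco]
  -- conjugation preserves commutator
  have hNorm : (commutator G).Normal := inferInstance
  have hconj : ∀ (g v : G), v ∈ commutator G → g * v * g⁻¹ ∈ commutator G :=
    fun g v hv => hNorm.conj_mem v hv g
  have hconj1 : ∀ (g v : G), g * v * g⁻¹ = 1 → v = 1 := by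
    intro g v h
    have := congrArg (fun x => g⁻¹ * x * g) h
    simpa [mul_assoc] using this
  -- inverse action of t
  have ita : t⁻¹ * a * t = c := by rw [← htc]; group
  have itb : t⁻¹ * b * t = a := by rw [← hta]; group
  have itc : t⁻¹ * c * t = b := by rw [← htb]; group
  -- the key equivariance relation
  have hR : ∀ (g v : G), v ∈ commutator G →
      g * (t * v * t⁻¹) * g⁻¹ = t * (g * v * g⁻¹) * t⁻¹ := by
    intro g v hv
    have hu : g * t * g⁻¹ * t⁻¹ ∈ commutator G := commutator_element_mem_commutator g t
    have hw : t * (g * v * g⁻¹) * t⁻¹ ∈ commutator G := hconj t _ (hconj g v hv)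
    have hcm : (g * t * g⁻¹ * t⁻¹) * (t * (g * v * g⁻¹) * t⁻¹)
        = (t * (g * v * g⁻¹) * t⁻¹) * (g * t * g⁻¹ * t⁻¹) := Vcomm _ _ hu hw
    calc g * (t * v * t⁻¹) * g⁻¹
        = (g * t * g⁻¹ * t⁻¹) * (t * (g * v * g⁻¹) * t⁻¹) * (g * t * g⁻¹ * t⁻¹)⁻¹ := by
          group
      _ = (t * (g * v * g⁻¹) * t⁻¹) * (g * t * g⁻¹ * t⁻¹) * (g * t * g⁻¹ * t⁻¹)⁻¹ := by
          rw [hcm]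
      _ = t * (g * v * g⁻¹) * t⁻¹ := by group
  -- conjugate of a nontrivial element of V is one of a, b, c
  have habc : ∀ (g x : G), (x = a ∨ x = b ∨ x = c) →
      (g * x * g⁻¹ = a ∨ g * x * g⁻¹ = b ∨ g * x * g⁻¹ = c) := by
    intro g x hx
    have hxm : x ∈ commutator G := by rcases hx with rfl|rfl|rfl <;> assumption
    have hne : x ≠ 1 := by rcases hx with rfl|rfl|rfl <;> assumption
    rcases (hV _).1 (hconj g x hxm) with h|h|h|h
    · exact absurd (hconj1 g x h) hne
    · exact Or.inl h
    · exact Or.inr (Or.inl h)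
    · exact Or.inr (Or.inr h)
  -- classification of the action of any g on {a,b,c}
  have classify : ∀ g : G,
      (g * a * g⁻¹ = a ∧ g * b * g⁻¹ = b ∧ g * c * g⁻¹ = c) ∨
      (g * a * g⁻¹ = b ∧ g * b * g⁻¹ = c ∧ g * c * g⁻¹ = a) ∨
      (g * a * g⁻¹ = c ∧ g * b * g⁻¹ = a ∧ g * c * g⁻¹ = b) := by
    intro g
    have eb : g * b * g⁻¹ = t * (g * a * g⁻¹) * t⁻¹ := by
      rw [← hR g a mema, hta]
    have ec : g * c * g⁻¹ = t * (g * b * g⁻¹) * t⁻¹ := by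
      rw [← hR g b memb, htb]
    rcases habc g a (Or.inl rfl) with h|h|h
    · refine Or.inl ⟨h, ?_, ?_⟩
      · rw [eb, h, hta]
      · rw [ec, eb, h, hta, htb]
    · refine Or.inr (Or.inl ⟨h, ?_, ?_⟩)
      · rw [eb, h, htb]
      · rw [ec, eb, h, htb, htc]
    · refine Or.inr (Or.inr ⟨h, ?_, ?_⟩)
      · rw [eb, h, htc]
      · rw [ec, eb, h, htc, hta]
  -- conj-fix implies commuting
  have key : ∀ x h : G, h * x * h⁻¹ = x → h * x = x * h := by
    intro x h e
    calc h * x = (h * x * h⁻¹) * h := by group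
      _ = x * h := by rw [e]
  -- every element is (centralizing element) * t^k
  have decomp : ∀ g : G, ∃ h : G,
      (h * a * h⁻¹ = a ∧ h * b * h⁻¹ = b ∧ h * c * h⁻¹ = c) ∧
      (g = h ∨ g = h * t ∨ g = h * (t * t)) := by
    intro g
    rcases classify g with ⟨h1, h2, h3⟩|⟨h1, h2, h3⟩|⟨h1, h2, h3⟩
    · exact ⟨g, ⟨h1, h2, h3⟩, Or.inl rfl⟩
    · refine ⟨g * t⁻¹, ⟨?_, ?_, ?_⟩, Or.inr (Or.inl (by group))⟩
      · calc g * t⁻¹ * a * (g * t⁻¹)⁻¹ = g * (t⁻¹ * a * t) * g⁻¹ := by group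
          _ = a := by rw [ita, h3]
      · calc g * t⁻¹ * b * (g * t⁻¹)⁻¹ = g * (t⁻¹ * b * t) * g⁻¹ := by group
          _ = b := by rw [itb, h1]
      · calc g * t⁻¹ * c * (g * t⁻¹)⁻¹ = g * (t⁻¹ * c * t) * g⁻¹ := by group
          _ = c := by rw [itc, h2]
    · refine ⟨g * t⁻¹ * t⁻¹, ⟨?_, ?_, ?_⟩,
        Or.inr (Or.inr (by simp [mul_assoc]))⟩
      · calc g * t⁻¹ * t⁻¹ * a * (g * t⁻¹ * t⁻¹)⁻¹
            = g * (t⁻¹ * (t⁻¹ * a * t) * t) * g⁻¹ := by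
              simp only [mul_inv_rev, inv_inv, mul_assoc]
          _ = a := by rw [ita, itc, h2]
      · calc g * t⁻¹ * t⁻¹ * b * (g * t⁻¹ * t⁻¹)⁻¹
            = g * (t⁻¹ * (t⁻¹ * b * t) * t) * g⁻¹ := by
              simp only [mul_inv_rev, inv_inv, mul_assoc]
          _ = b := by rw [itb, ita, h3]
      · calc g * t⁻¹ * t⁻¹ * c * (g * t⁻¹ * t⁻¹)⁻¹
            = g * (t⁻¹ * (t⁻¹ * c * t) * t) * g⁻¹ := by
              simp only [mul_inv_rev, inv_inv, mul_assoc]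
          _ = c := by rw [itc, itb, h1]
  -- elements of V are moved by t
  have hmove : ∀ x : G, (x = a ∨ x = b ∨ x = c) → t * x * t⁻¹ ≠ x := by
    rintro x (rfl|rfl|rfl)
    · rw [hta]; exact fun h => hab1 h.symm
    · rw [htb]; exact hcb
    · rw [htc]; exact fun h => hca h.symm
  -- commuting with everything in V
  have ccomm : ∀ h : G, (h * a * h⁻¹ = a ∧ h * b * h⁻¹ = b ∧ h * c * h⁻¹ = c) →
      ∀ v : G, v ∈ commutator G → h * v = v * h := by
    intro h hcon v hv
    obtain ⟨e1, e2, e3⟩ := hcon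
    rcases (hV v).1 hv with rfl|rfl|rfl|rfl
    · simp
    · exact key _ _ e1
    · exact key _ _ e2
    · exact key _ _ e3
  -- notation: Cc h
  -- decompose a centralizing element as (t-commuting) * (element of V)
  have decompC : ∀ h : G, (h * a * h⁻¹ = a ∧ h * b * h⁻¹ = b ∧ h * c * h⁻¹ = c) →
      ∃ d v : G, ((d * a * d⁻¹ = a ∧ d * b * d⁻¹ = b ∧ d * c * d⁻¹ = c) ∧ t * d = d * t)
        ∧ (v ∈ commutator G) ∧ h = d * v := by
    intro h hcon
    obtain ⟨e1, e2, e3⟩ := hcon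
    have hpsi : t * h * t⁻¹ * h⁻¹ ∈ commutator G := commutator_element_mem_commutator t h
    -- pick v in V with ⁅t,v⁆ = ⁅t,h⁆ ; here ⁅t,1⁆=1, ⁅t,a⁆=c, ⁅t,b⁆=a, ⁅t,c⁆=b
    have pick : ∃ v : G, v ∈ commutator G ∧ v⁻¹ = v ∧
        t * v * t⁻¹ * v⁻¹ = t * h * t⁻¹ * h⁻¹ := by
      rcases (hV _).1 hpsi with e|e|e|e
      · exact ⟨1, mem1, by simp, by simp [e]⟩
      · refine ⟨b, memb, binv, ?_⟩
        rw [e, htb, binv, hcba]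
      · refine ⟨c, memc, cinv, ?_⟩
        rw [e, htc, cinv, hacb]
      · refine ⟨a, mema, ainv, ?_⟩
        rw [e, hta, ainv, hba]
    obtain ⟨v, hvm, hvi, hve⟩ := pick
    refine ⟨h * v⁻¹, v, ⟨⟨?_, ?_, ?_⟩, ?_⟩, hvm, by group⟩
    · calc h * v⁻¹ * a * (h * v⁻¹)⁻¹ = h * (v⁻¹ * a * v) * h⁻¹ := by group
        _ = h * (a * v⁻¹ * v) * h⁻¹ := by
            rw [show v⁻¹ * a = a * v⁻¹ by
              rw [hvi]; exact (Vcomm a v mema hvm).symm]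
        _ = a := by rw [mul_assoc a, inv_mul_cancel, mul_one, e1]
    · calc h * v⁻¹ * b * (h * v⁻¹)⁻¹ = h * (v⁻¹ * b * v) * h⁻¹ := by group
        _ = h * (b * v⁻¹ * v) * h⁻¹ := by
            rw [show v⁻¹ * b = b * v⁻¹ by
              rw [hvi]; exact (Vcomm b v memb hvm).symm]
        _ = b := by rw [mul_assoc b, inv_mul_cancel, mul_one, e2]
    · calc h * v⁻¹ * c * (h * v⁻¹)⁻¹ = h * (v⁻¹ * c * v) * h⁻¹ := by group
        _ = h * (c * v⁻¹ * v) * h⁻¹ := by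
            rw [show v⁻¹ * c = c * v⁻¹ by
              rw [hvi]; exact (Vcomm c v memc hvm).symm]
        _ = c := by rw [mul_assoc c, inv_mul_cancel, mul_one, e3]
    · -- t * (h * v⁻¹) = (h * v⁻¹) * t
      -- from ⁅t,v⁆ = ⁅t,h⁆ : t h t⁻¹ h⁻¹ = t v t⁻¹ v⁻¹
      -- so t h v⁻¹ = t v t⁻¹ v⁻¹ h t ... derive directly:
      -- t v t⁻¹ v⁻¹ = t h t⁻¹ h⁻¹  ⇒  h⁻¹ t v t⁻¹ v⁻¹ h = t h t⁻¹ h⁻¹ ... compute: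
      have e4 : t * v * t⁻¹ * v⁻¹ = t * h * t⁻¹ * h⁻¹ := hve
      -- want: t * (h * v⁻¹) = h * v⁻¹ * t, i.e. t h v⁻¹ t⁻¹ ... rearrange e4:
      have e5 : t * h = (t * v * t⁻¹ * v⁻¹) * h * t := by
        rw [e4]; group
      -- also h commutes with t v t⁻¹ and with v (both in V)
      have hv1 : t * v * t⁻¹ ∈ commutator G := hconj t v hvm
      have c1 : h * (t * v * t⁻¹) = (t * v * t⁻¹) * h :=
        ccomm h ⟨e1, e2, e3⟩ _ hv1
      have c2 : h * v = v * h := ccomm h ⟨e1, e2, e3⟩ _ hvm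
      -- now compute t * (h * v⁻¹):
      -- = (t v t⁻¹ v⁻¹) h t v⁻¹ ; and (h v⁻¹) t = h v⁻¹ t.
      -- goal: (t v t⁻¹ v⁻¹) h t v⁻¹ = h v⁻¹ t
      -- use t v⁻¹ = t v⁻¹; note v⁻¹ = v. and t v t⁻¹ * (t v⁻¹) = t. so LHS
      calc t * (h * v⁻¹)
          = ((t * v * t⁻¹ * v⁻¹) * h * t) * v⁻¹ := by rw [← mul_assoc, e5]
        _ = (t * v * t⁻¹) * (v⁻¹ * h) * (t * v⁻¹ * t⁻¹) * t := by group
        _ = (t * v * t⁻¹) * (v⁻¹ * h) * (t * v * t⁻¹) * t := by rw [hvi]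
        _ = (t * v * t⁻¹) * v⁻¹ * (h * (t * v * t⁻¹)) * t := by group
        _ = (t * v * t⁻¹) * v⁻¹ * ((t * v * t⁻¹) * h) * t := by rw [c1]
        _ = (t * v * t⁻¹) * (v⁻¹ * (t * v * t⁻¹)) * h * t := by group
        _ = (t * v * t⁻¹) * ((t * v * t⁻¹) * v⁻¹) * h * t := by
            rw [show v⁻¹ * (t * v * t⁻¹) = (t * v * t⁻¹) * v⁻¹ by
              rw [hvi]; exact (Vcomm _ _ hv1 hvm).symm]
        _ = ((t * v * t⁻¹) * (t * v * t⁻¹)) * v⁻¹ * h * t := by group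
        _ = v⁻¹ * h * t := by
            rw [show (t * v * t⁻¹) * (t * v * t⁻¹) = 1 from ?_, one_mul]
            rcases (hV _).1 hv1 with e|e|e|e <;> rw [e]
            · simp
            · exact ha2
            · exact hb2
            · exact hc2
        _ = h * v⁻¹ * t := by
            rw [show v⁻¹ * h = h * v⁻¹ by rw [hvi]; exact c2.symm]
  -- an element of V commuting with t is trivial
  have VDtriv : ∀ v : G, v ∈ commutator G → t * v = v * t → v = 1 := by
    intro v hv he
    have hfix : t * v * t⁻¹ = v := by rw [he]; group
    rcases (hV v).1 hv with rfl|h|h|h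
    · rfl
    · exact absurd hfix (hmove v (Or.inl h))
    · exact absurd hfix (hmove v (Or.inr (Or.inl h)))
    · exact absurd hfix (hmove v (Or.inr (Or.inr h)))
  -- any centralizing element commuting with t is central, hence 1
  have Dtriv : ∀ d : G, (d * a * d⁻¹ = a ∧ d * b * d⁻¹ = b ∧ d * c * d⁻¹ = c) →
      t * d = d * t → d = 1 := by
    intro d hcon htd
    have hcen : d ∈ Subgroup.center G := by
      rw [Subgroup.mem_center_iff]
      intro g
      obtain ⟨h, hcon', hg⟩ := decomp g
      obtain ⟨d', v, ⟨hcon'', htd'⟩, hvm, hdv⟩ := decompC h hcon'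
      -- d commutes with v
      have c1 : d * v = v * d := ccomm d hcon v hvm
      -- d commutes with d' : their commutator is in V and commutes with t
      have c2 : d' * d = d * d' := by
        have hx : d' * d * d'⁻¹ * d⁻¹ ∈ commutator G :=
          commutator_element_mem_commutator d' d
        have hxt : t * (d' * d * d'⁻¹ * d⁻¹) = (d' * d * d'⁻¹ * d⁻¹) * t := by
          have h1 : t * d' = d' * t := htd'
          have h2 : t * d = d * t := htd
          have h1' : t * d'⁻¹ = d'⁻¹ * t := Commute.inv_right (h1 : Commute t d')
          have h2' : t * d⁻¹ = d⁻¹ * t := Commute.inv_right (h2 : Commute t d)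
          calc t * (d' * d * d'⁻¹ * d⁻¹) = (t * d') * d * d'⁻¹ * d⁻¹ := by group
            _ = d' * (t * d) * d'⁻¹ * d⁻¹ := by rw [h1]; group
            _ = d' * d * (t * d'⁻¹) * d⁻¹ := by rw [h2]; group
            _ = d' * d * d'⁻¹ * (t * d⁻¹) := by rw [h1']; group
            _ = d' * d * d'⁻¹ * d⁻¹ * t := by rw [h2']; group
        have := VDtriv _ hx hxt
        have : d' * d * d'⁻¹ * d⁻¹ = 1 := this
        calc d' * d = (d' * d * d'⁻¹ * d⁻¹) * (d * d') := by group
          _ = d * d' := by rw [this, one_mul]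
      -- hence d commutes with h = d' * v, and with t, so with g
      have ch : h * d = d * h := by
        calc h * d = d' * (v * d) := by rw [hdv]; group
          _ = d' * (d * v) := by rw [c1]
          _ = (d' * d) * v := by group
          _ = d * (d' * v) := by rw [c2]; group
          _ = d * h := by rw [hdv]
      rcases hg with rfl|rfl|rfl
      · exact ch
      · calc (h * t) * d = h * (t * d) := by group
          _ = h * (d * t) := by rw [htd]
          _ = (h * d) * t := by group
          _ = (d * h) * t := by rw [ch]
          _ = d * (h * t) := by group
      · calc (h * (t * t)) * d = h * t * (t * d) := by group
          _ = h * t * (d * t) := by rw [htd]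
          _ = h * (t * d) * t := by group
          _ = h * (d * t) * t := by rw [htd]
          _ = (h * d) * (t * t) := by group
          _ = (d * h) * (t * t) := by rw [ch]
          _ = d * (h * (t * t)) := by group
    rw [hZ, Subgroup.mem_bot] at hcen
    exact hcen
  -- centralizing elements are exactly V
  have CeqV : ∀ h : G, (h * a * h⁻¹ = a ∧ h * b * h⁻¹ = b ∧ h * c * h⁻¹ = c) →
      h ∈ commutator G := by
    intro h hcon
    obtain ⟨d, v, ⟨hcon', htd⟩, hvm, hdv⟩ := decompC h hcon
    rw [hdv, Dtriv d hcon' htd, one_mul]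
    exact hvm
  -- t^3 = 1
  have t3 : t * t * t = 1 := by
    have hcon : (t*t*t) * a * (t*t*t)⁻¹ = a ∧ (t*t*t) * b * (t*t*t)⁻¹ = b ∧
        (t*t*t) * c * (t*t*t)⁻¹ = c := by
      refine ⟨?_, ?_, ?_⟩
      · calc (t*t*t) * a * (t*t*t)⁻¹ = t * (t * (t * a * t⁻¹) * t⁻¹) * t⁻¹ := by group
          _ = a := by rw [hta, htb, htc]
      · calc (t*t*t) * b * (t*t*t)⁻¹ = t * (t * (t * b * t⁻¹) * t⁻¹) * t⁻¹ := by group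
          _ = b := by rw [htb, htc, hta]
      · calc (t*t*t) * c * (t*t*t)⁻¹ = t * (t * (t * c * t⁻¹) * t⁻¹) * t⁻¹ := by group
          _ = c := by rw [htc, hta, htb]
    exact VDtriv _ (CeqV _ hcon) (by group)
  have tinv : t⁻¹ = t * t := by
    rw [show t * t = (t * t * t) * t⁻¹ by group, t3, one_mul]
  -- t ∉ V
  have ht1 : t ≠ 1 := by
    intro h; rw [h] at hta; simp at hta; exact hab1 hta
  have tnotV : t ∉ commutator G := by
    intro hm
    rcases (hV t).1 hm with h|h|h|h
    · exact ht1 h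
    · rw [h] at hta
      rw [show a * a * a⁻¹ = a by group] at hta
      exact hab1 hta
    · rw [h] at hta
      rw [show b * a * b⁻¹ = b * a * b by rw [binv], hba, hcba] at hta
      exact hab1 hta
    · rw [h] at hta
      rw [show c * a * c⁻¹ = c * a * c by rw [cinv], hcab2, hbca] at hta
      exact hab1 hta
  have ttnotV : t * t ∉ commutator G := by
    intro hm
    apply tnotV
    have : (t * t) * (t * t) ∈ commutator G := Subgroup.mul_mem _ hm hm
    have ht4 : (t * t) * (t * t) = t := by
      rw [show (t*t)*(t*t) = (t*t*t)*t by group, t3, one_mul]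
    rwa [ht4] at this
  -- the counting map
  have hVt : ∀ x y : G, x ∈ commutator G → y ∈ commutator G → (x : G) ≠ y * t := by
    intro x y hx hy h
    apply tnotV
    have : y⁻¹ * x ∈ commutator G := Subgroup.mul_mem _ (Subgroup.inv_mem _ hy) hx
    rwa [h, show y⁻¹ * (y * t) = t by group] at this
  have hVtt : ∀ x y : G, x ∈ commutator G → y ∈ commutator G → (x : G) ≠ y * (t * t) := by
    intro x y hx hy h
    apply ttnotV
    have : y⁻¹ * x ∈ commutator G := Subgroup.mul_mem _ (Subgroup.inv_mem _ hy) hx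
    rwa [h, show y⁻¹ * (y * (t * t)) = t * t by group] at this
  have zmod3cases : ∀ z : ZMod 3, z = 0 ∨ z = 1 ∨ z = 2 := by decide
  have v0 : ((0:ZMod 3)).val = 0 := rfl
  have v1 : ((1:ZMod 3)).val = 1 := rfl
  have v2 : ((2:ZMod 3)).val = 2 := rfl
  have hm_bij : Function.Bijective
      (fun p : (commutator G) × ZMod 3 => (p.1 : G) * t ^ (p.2.val)) := by
    constructor
    · rintro ⟨x, i⟩ ⟨y, j⟩ hxy
      simp only at hxy
      rcases zmod3cases i with rfl|rfl|rfl <;> rcases zmod3cases j with rfl|rfl|rfl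
      · rw [v0, pow_zero, mul_one, mul_one] at hxy
        exact Prod.ext (Subtype.ext hxy) rfl
      · rw [v0, v1, pow_zero, pow_one, mul_one] at hxy
        exact absurd hxy (hVt _ _ x.2 y.2)
      · rw [v0, v2, pow_zero, pow_two, mul_one] at hxy
        exact absurd hxy (hVtt _ _ x.2 y.2)
      · rw [v0, v1, pow_zero, pow_one, mul_one] at hxy
        exact absurd hxy.symm (hVt _ _ y.2 x.2)
      · rw [v1, pow_one] at hxy
        exact Prod.ext (Subtype.ext (mul_right_cancel hxy)) rfl
      · rw [v1, v2, pow_one, pow_two, ← mul_assoc] at hxy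
        exact absurd (mul_right_cancel hxy) (hVt _ _ x.2 y.2)
      · rw [v0, v2, pow_zero, pow_two, mul_one] at hxy
        exact absurd hxy.symm (hVtt _ _ y.2 x.2)
      · rw [v1, v2, pow_one, pow_two, ← mul_assoc] at hxy
        exact absurd (mul_right_cancel hxy).symm (hVt _ _ y.2 x.2)
      · rw [v2, pow_two, ← mul_assoc, ← mul_assoc] at hxy
        exact Prod.ext (Subtype.ext (mul_right_cancel (mul_right_cancel hxy))) rfl
    · intro g
      obtain ⟨h, hcon, hg⟩ := decomp g
      have hmem : h ∈ commutator G := CeqV h hcon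
      rcases hg with h1|h1|h1
      · exact ⟨⟨⟨h, hmem⟩, 0⟩, by simp only [v0, pow_zero, mul_one]; exact h1.symm⟩
      · exact ⟨⟨⟨h, hmem⟩, 1⟩, by simp only [v1, pow_one]; exact h1.symm⟩
      · exact ⟨⟨⟨h, hmem⟩, 2⟩, by simp only [v2, pow_two]; exact h1.symm⟩
  have cardG : Nat.card G = 12 := by
    rw [← Nat.card_congr (Equiv.ofBijective _ hm_bij), Nat.card_prod, hcard4, Nat.card_zmod]
  -- the subgroup generated by t
  set H : Subgroup G := Subgroup.zpowers t with hH
  have t3' : t ^ 3 = 1 := by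
    rw [pow_succ, pow_two]; exact t3
  haveI : Fact (Nat.Prime 3) := ⟨by norm_num⟩
  have hord : orderOf t = 3 := orderOf_eq_prime t3' ht1
  have cardH : Nat.card H = 3 := by rw [hH, Nat.card_zpowers, hord]
  have Hmem : ∀ x : G, x ∈ H → x = 1 ∨ x = t ∨ x = t * t := by
    intro x hx
    obtain ⟨n, hn⟩ := hx
    have hn' : t ^ n = x := hn
    have hsplit : t ^ n = t ^ (n % 3) := by
      conv_lhs => rw [← Int.mul_ediv_add_emod n 3]
      rw [zpow_add, zpow_mul, show ((3:ℤ)) = ((3:ℕ):ℤ) by norm_num,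
        zpow_natCast, t3', one_zpow, one_mul]
    have hc3 : n % 3 = 0 ∨ n % 3 = 1 ∨ n % 3 = 2 := by omega
    rcases hc3 with h|h|h
    · left; rw [← hn', hsplit, h, zpow_zero]
    · right; left; rw [← hn', hsplit, h, zpow_one]
    · right; right; rw [← hn', hsplit, h, show ((2:ℤ)) = 1 + 1 by norm_num,
        zpow_add, zpow_one]
  have tt_inv : (t * t)⁻¹ = t := by rw [← tinv, inv_inv]
  have itt : t⁻¹ * t⁻¹ = t := by
    rw [tinv, show t * t * (t * t) = (t * t * t) * t by group, t3, one_mul]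
  have hsmul : ∀ (g x : G), g • (QuotientGroup.mk x : G ⧸ H) = QuotientGroup.mk (g * x) :=
    fun g x => rfl
  have hinj : Function.Injective (MulAction.toPermHom G (G ⧸ H)) := by
    rw [injective_iff_map_eq_one]
    intro g hg
    have hfix : ∀ x : G, (QuotientGroup.mk (g * x) : G ⧸ H) = QuotientGroup.mk x := by
      intro x
      have h1 : (MulAction.toPermHom G (G ⧸ H)) g (QuotientGroup.mk x) = QuotientGroup.mk x := by
        rw [hg]; rfl
      rw [MulAction.toPermHom_apply, MulAction.toPerm_apply, hsmul] at h1
      exact h1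
    have hgH : g ∈ H := by
      have h1 := (QuotientGroup.eq).1 (hfix 1)
      simp only [mul_one] at h1
      exact (Subgroup.inv_mem_iff H).1 h1
    have ha' := (QuotientGroup.eq).1 (hfix a)
    rcases Hmem g hgH with h|h|h
    · exact h
    · -- g = t : contradiction
      exfalso
      rw [h, show (t * a)⁻¹ * a = a⁻¹ * t⁻¹ * a by group] at ha'
      rcases Hmem _ ha' with h2|h2|h2
      · apply ht1
        have h3 := congrArg (fun x => a * x * a⁻¹) h2
        rw [show a * (a⁻¹ * t⁻¹ * a) * a⁻¹ = t⁻¹ by group] at h3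
        simp only [mul_one] at h3
        rw [show a * a⁻¹ = 1 by group] at h3
        exact inv_eq_one.mp h3
      · -- a⁻¹ t⁻¹ a = t  ⇒  t*t = c ∈ V, contradiction
        apply ttnotV
        have e2 : a = t * (a * t) := by
          have h3 := congrArg (fun x => t * (a * x)) h2
          rw [show t * (a * (a⁻¹ * t⁻¹ * a)) = a by group] at h3
          exact h3
        have e3 : b * (t * t) = a := by
          rw [← hta, show t * a * t⁻¹ * (t * t) = t * (a * t) by group]
          exact e2.symm
        have e4 : t * t = c := by
          have h4 := congrArg (fun x => b * x) e3
          rw [show b * (b * (t * t)) = (b * b) * (t * t) by group, hb2, one_mul,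
            hba] at h4
          exact h4
        rw [e4]; exact memc
      · -- a⁻¹ t⁻¹ a = t*t = t⁻¹  ⇒  t and a commute, contradiction
        apply hmove a (Or.inl rfl)
        have h2' : a⁻¹ * t⁻¹ * a = t⁻¹ := by rw [h2, ← tinv]
        have h5 : t⁻¹ * a = a * t⁻¹ := by
          have h3 := congrArg (fun x => a * x) h2'
          rw [show a * (a⁻¹ * t⁻¹ * a) = t⁻¹ * a by group] at h3
          exact h3
        calc t * a * t⁻¹ = t * (a * t⁻¹) := by group
          _ = t * (t⁻¹ * a) := by rw [← h5]
          _ = a := by group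
    · -- g = t * t : contradiction
      exfalso
      rw [h, show (t * t * a)⁻¹ * a = a⁻¹ * (t * t)⁻¹ * a by group, tt_inv] at ha'
      rcases Hmem _ ha' with h2|h2|h2
      · apply ht1
        have h3 := congrArg (fun x => a * x * a⁻¹) h2
        rw [show a * (a⁻¹ * t * a) * a⁻¹ = t by group] at h3
        simp only [mul_one] at h3
        rw [show a * a⁻¹ = 1 by group] at h3
        exact h3
      · -- a⁻¹ t a = t ⇒ commute, contradiction
        apply hmove a (Or.inl rfl)
        have h3 := congrArg (fun x => a * x) h2
        rw [show a * (a⁻¹ * t * a) = t * a by group] at h3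
        calc t * a * t⁻¹ = (t * a) * t⁻¹ := by group
          _ = (a * t) * t⁻¹ := by rw [h3]
          _ = a := by group
      · -- a⁻¹ t a = t*t = t⁻¹ ⇒ t = c ∈ V, contradiction
        apply tnotV
        have h3 := congrArg (fun x => a * x) h2
        rw [show a * (a⁻¹ * t * a) = t * a by group] at h3
        -- h3 : t * a = a * (t * t)
        have e2 : b = a * t := by
          rw [← hta, h3, show a * (t * t) * t⁻¹ = a * t by group]
        have h4 := congrArg (fun x => a * x) e2
        rw [show a * (a * t) = (a * a) * t by group, ha2, one_mul, hc] at h4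
        -- h4 : c = t
        rw [← h4]; exact memc
  -- quotient has 4 elements
  have cardQ : Nat.card (G ⧸ H) = 4 := by
    have := Subgroup.card_eq_card_quotient_mul_card_subgroup H
    rw [cardG, cardH] at this
    omega
  letI : Fintype (G ⧸ H) := Fintype.ofFinite _
  have cardQ' : Fintype.card (G ⧸ H) = 4 := by
    rw [← Nat.card_eq_fintype_card, cardQ]
  let eqv : (G ⧸ H) ≃ Fin 4 := Fintype.equivFinOfCardEq cardQ'
  let F : G →* Equiv.Perm (Fin 4) :=
    (permCongrMulEquiv eqv).toMonoidHom.comp (MulAction.toPermHom G (G ⧸ H))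
  have Finj : Function.Injective F := by
    have hF : ⇑F = ⇑(permCongrMulEquiv eqv) ∘ ⇑(MulAction.toPermHom G (G ⧸ H)) := rfl
    rw [hF]
    exact (permCongrMulEquiv eqv).injective.comp hinj
  -- every value of F is an even permutation
  have hsign : ∀ g : G, Equiv.Perm.sign (F g) = 1 := by
    have hker : commutator G ≤ (Equiv.Perm.sign.comp F).ker :=
      Abelianization.commutator_subset_ker _
    have hst : Equiv.Perm.sign (F t) = 1 := by
      have h3 : (Equiv.Perm.sign (F t))^3 = 1 := by
        rw [← map_pow, ← map_pow, t3', map_one, map_one]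
      exact int_units_cube _ h3
    intro g
    obtain ⟨h, hcon, hg⟩ := decomp g
    have hmem : h ∈ commutator G := CeqV h hcon
    have hsh : Equiv.Perm.sign (F h) = 1 := hker hmem
    rcases hg with rfl|rfl|rfl
    · exact hsh
    · simp [map_mul, hsh, hst]
    · simp [map_mul, hsh, hst]
  -- corestrict to the alternating group
  let F' : G →* alternatingGroup (Fin 4) :=
    F.codRestrict (alternatingGroup (Fin 4))
      (fun g => Equiv.Perm.mem_alternatingGroup.2 (hsign g))
  have F'inj : Function.Injective F' := by
    intro x y hxy
    apply Finj
    exact congrArg Subtype.val hxy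
  have cardA4 : Nat.card (alternatingGroup (Fin 4)) = 12 := by
    have h24 : Fintype.card (Equiv.Perm (Fin 4)) = 24 := by
      rw [Fintype.card_perm]; rfl
    have := two_mul_card_alternatingGroup (α := Fin 4)
    rw [h24] at this
    rw [Nat.card_eq_fintype_card]
    omega
  have F'bij : Function.Bijective F' := by
    rw [Nat.bijective_iff_injective_and_card]
    exact ⟨F'inj, by rw [cardG, cardA4]⟩
  exact ⟨MulEquiv.ofBijective F' F'bij⟩


theorem isomorphic_A4_of_commutator_klein_four
    (G : Type*) [Group G] [Finite G]
    (hZ : Subgroup.center G = ⊥)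
    (hcomm : Nonempty
      ((commutator G) ≃* (Multiplicative (ZMod 2) × Multiplicative (ZMod 2))))
    (hss : ¬ IsSupersolvable G) :
    Nonempty (G ≃* alternatingGroup (Fin 4)) := by
  obtain ⟨e⟩ := hcomm
  set M := Multiplicative (ZMod 2) × Multiplicative (ZMod 2) with hM
  let u : M := (Multiplicative.ofAdd 1, 1)
  let w : M := (1, Multiplicative.ofAdd 1)
  let A : commutator G := e.symm u
  let B : commutator G := e.symm w
  let a : G := A
  let b : G := B
  have hsymm_inj : Function.Injective e.symm := e.symm.injective
  have coe_inj : ∀ x y : commutator G, (x : G) = y → x = y := fun x y h => Subtype.ext h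
  have ha1 : a ≠ 1 := by
    intro h
    have h2 : A = 1 := OneMemClass.coe_eq_one.1 h
    have h3 : e.symm u = e.symm 1 := by rw [map_one]; exact h2
    exact absurd (hsymm_inj h3) (by decide)
  have hb1 : b ≠ 1 := by
    intro h
    have h2 : B = 1 := OneMemClass.coe_eq_one.1 h
    have h3 : e.symm w = e.symm 1 := by rw [map_one]; exact h2
    exact absurd (hsymm_inj h3) (by decide)
  have hab1 : a ≠ b := by
    intro h
    exact absurd (hsymm_inj (coe_inj _ _ h)) (by decide)
  have hA2 : A * A = 1 := by
    show e.symm u * e.symm u = 1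
    rw [← map_mul, show u * u = (1:M) by decide, map_one]
  have hB2 : B * B = 1 := by
    show e.symm w * e.symm w = 1
    rw [← map_mul, show w * w = (1:M) by decide, map_one]
  have ha2 : a * a = 1 := by
    have : ((A * A : commutator G) : G) = ((1 : commutator G) : G) := by rw [hA2]
    simpa using this
  have hb2 : b * b = 1 := by
    have : ((B * B : commutator G) : G) = ((1 : commutator G) : G) := by rw [hB2]
    simpa using this
  have hABBA : A * B = B * A := by
    show e.symm u * e.symm w = e.symm w * e.symm u
    rw [← map_mul, ← map_mul, show u * w = w * u by decide]
  have hco : a * b = b * a := by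
    have : ((A * B : commutator G) : G) = ((B * A : commutator G) : G) := by rw [hABBA]
    simpa using this
  have hV : ∀ v : G, v ∈ commutator G ↔ (v = 1 ∨ v = a ∨ v = b ∨ v = a * b) := by
    intro v
    constructor
    · intro hv
      have key : ∀ m : M, m = 1 ∨ m = u ∨ m = w ∨ m = u * w := by decide
      have hv2 : (⟨v, hv⟩ : commutator G) = e.symm (e ⟨v, hv⟩) := (e.symm_apply_apply _).symm
      rcases key (e ⟨v, hv⟩) with h|h|h|h
      · left
        have : (⟨v, hv⟩ : commutator G) = 1 := by rw [hv2, h, map_one]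
        exact OneMemClass.coe_eq_one.2 this
      · right; left
        have : (⟨v, hv⟩ : commutator G) = A := by rw [hv2, h]
        exact congrArg Subtype.val this
      · right; right; left
        have : (⟨v, hv⟩ : commutator G) = B := by rw [hv2, h]
        exact congrArg Subtype.val this
      · right; right; right
        have : (⟨v, hv⟩ : commutator G) = A * B := by rw [hv2, h, map_mul]
        exact congrArg Subtype.val this
    · rintro (rfl|rfl|rfl|rfl)
      · exact Subgroup.one_mem _
      · exact A.2
      · exact B.2
      · exact (A * B).2
  have hcard4 : Nat.card (commutator G) = 4 := by
    rw [Nat.card_congr e.toEquiv]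
    simp [Nat.card_eq_fintype_card]
  -- derived multiplication table
  have ainv : a⁻¹ = a := inv_eq_of_mul_eq_one_right ha2
  have hc1 : a * b ≠ 1 := by
    intro h
    exact hab1 (by rw [← ainv]; exact inv_eq_of_mul_eq_one_right h)
  have hca : a * b ≠ a := by
    intro h; apply hb1
    have := congrArg (fun x => a * x) h
    simpa [← mul_assoc, ha2] using this
  have hcb : a * b ≠ b := by
    intro h; apply ha1
    have := congrArg (fun x => x * b) h
    simpa [mul_assoc, hb2] using this
  have hc2 : (a * b) * (a * b) = 1 := by
    calc a * b * (a * b) = a * (b * a) * b := by group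
      _ = a * (a * b) * b := by rw [hco]
      _ = (a * a) * (b * b) := by group
      _ = 1 := by rw [ha2, hb2, one_mul]
  have hacb : a * (a * b) = b := by rw [← mul_assoc, ha2, one_mul]
  have hcab2 : (a * b) * a = b := by
    rw [hco, mul_assoc, ha2, mul_one]
  have hbca : b * (a * b) = a := by
    rw [hco, ← mul_assoc, hb2, one_mul]
  have hcba : (a * b) * b = a := by rw [mul_assoc, hb2, mul_one]
  -- conjugation basics
  have hNorm : (commutator G).Normal := inferInstance
  have hconj : ∀ (g v : G), v ∈ commutator G → g * v * g⁻¹ ∈ commutator G :=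
    fun g v hv => hNorm.conj_mem v hv g
  have hconj1 : ∀ (g v : G), g * v * g⁻¹ = 1 → v = 1 := by
    intro g v h
    have := congrArg (fun x => g⁻¹ * x * g) h
    simpa [mul_assoc] using this
  have habc : ∀ (g x : G), (x = a ∨ x = b ∨ x = a * b) →
      (g * x * g⁻¹ = a ∨ g * x * g⁻¹ = b ∨ g * x * g⁻¹ = a * b) := by
    intro g x hx
    have hxm : x ∈ commutator G := by
      rcases hx with rfl|rfl|rfl
      · exact A.2
      · exact B.2
      · exact (hV _).2 (Or.inr (Or.inr (Or.inr rfl)))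
    have hne : x ≠ 1 := by rcases hx with rfl|rfl|rfl <;> assumption
    rcases (hV _).1 (hconj g x hxm) with h|h|h|h
    · exact absurd (hconj1 g x h) hne
    · exact Or.inl h
    · exact Or.inr (Or.inl h)
    · exact Or.inr (Or.inr h)
  have cinj : ∀ (g x y : G), g * x * g⁻¹ = g * y * g⁻¹ → x = y := by
    intro g x y h
    have := congrArg (fun z => g⁻¹ * z * g) h
    simpa [mul_assoc] using this
  have gmul : ∀ g : G, g * (a * b) * g⁻¹ = (g * a * g⁻¹) * (g * b * g⁻¹) := by
    intro g; group
  have conjb : ∀ g : G, g * b * g⁻¹ = (g * a * g⁻¹) * (g * (a * b) * g⁻¹) := by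
    intro g
    calc g * b * g⁻¹ = g * (a * (a * b)) * g⁻¹ := by rw [hacb]
      _ = (g * a * g⁻¹) * (g * (a * b) * g⁻¹) := by group
  have hcentral : ∀ x : G, x ≠ 1 → (∀ g : G, g * x * g⁻¹ = x) → False := by
    intro x hx h
    apply hx
    have : x ∈ Subgroup.center G := by
      rw [Subgroup.mem_center_iff]
      intro g
      calc g * x = (g * x * g⁻¹) * g := by group
        _ = x * g := by rw [h g]
    rw [hZ, Subgroup.mem_bot] at this
    exact this
  -- the two conclusions from a 3-cycle
  have done1 : ∀ t : G, t * a * t⁻¹ = b → t * b * t⁻¹ = a * b → t * (a * b) * t⁻¹ = a →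
      Nonempty (G ≃* alternatingGroup (Fin 4)) := by
    intro t h1 h2 h3
    exact aux_main G hZ a b (a * b) t ha1 hb1 hab1 ha2 hb2 hco rfl hcard4 hV h1 h2 h3
  have done2 : ∀ t : G, t * a * t⁻¹ = a * b → t * (a * b) * t⁻¹ = b → t * b * t⁻¹ = a →
      Nonempty (G ≃* alternatingGroup (Fin 4)) := by
    intro t h1 h2 h3
    refine aux_main G hZ a (a * b) b t ha1 hc1 (Ne.symm hca) ha2 hc2 ?_ hacb hcard4 ?_ h1 h2 h3
    · rw [hacb, hcab2]
    · intro v; rw [hV v]; tauto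
  -- find a 3-cycle
  by_cases hA : ∀ g : G, g * a * g⁻¹ = a
  · exact absurd hA (fun h => (hcentral a ha1 h).elim)
  push_neg at hA
  obtain ⟨g, hg⟩ := hA
  rcases habc g a (Or.inl rfl) with h|h|h
  · exact absurd h hg
  · -- g sends a to b
    rcases habc g b (Or.inr (Or.inl rfl)) with k|k|k
    · -- g = (a b); find something moving a*b
      have gab : g * (a * b) * g⁻¹ = a * b := by rw [gmul g, h, k, ← hco]
      by_cases hC : ∀ g' : G, g' * (a * b) * g'⁻¹ = a * b
      · exact absurd hC (fun h' => (hcentral (a * b) hc1 h').elim)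
      push_neg at hC
      obtain ⟨h', hh'⟩ := hC
      rcases habc h' (a * b) (Or.inr (Or.inr rfl)) with m|m|m
      · -- h' sends ab to a
        rcases habc h' a (Or.inl rfl) with n|n|n
        · exact absurd (cinj h' _ _ (n.trans m.symm)) (Ne.symm hca)
        · -- h' : a→b, ab→a, so b→ab : direction 1
          have nb : h' * b * h'⁻¹ = a * b := by rw [conjb h', n, m, ← hco]
          exact done1 h' n nb m
        · -- h' : a→ab, ab→a, b→b ; compose with g = (a b)
          have nb : h' * b * h'⁻¹ = b := by rw [conjb h', n, m, hcab2]
          refine done2 (g * h') ?_ ?_ ?_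
          · rw [show g * h' * a * (g * h')⁻¹ = g * (h' * a * h'⁻¹) * g⁻¹ by group,
              n, gab]
          · rw [show g * h' * (a * b) * (g * h')⁻¹ = g * (h' * (a * b) * h'⁻¹) * g⁻¹ by group,
              m, h]
          · rw [show g * h' * b * (g * h')⁻¹ = g * (h' * b * h'⁻¹) * g⁻¹ by group,
              nb, k]
      · -- h' sends ab to b
        rcases habc h' a (Or.inl rfl) with n|n|n
        · -- h' : a→a, ab→b, b→ab ; compose with g = (a b)
          have nb : h' * b * h'⁻¹ = a * b := by rw [conjb h', n, m]
          refine done1 (g * h') ?_ ?_ ?_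
          · rw [show g * h' * a * (g * h')⁻¹ = g * (h' * a * h'⁻¹) * g⁻¹ by group,
              n, h]
          · rw [show g * h' * b * (g * h')⁻¹ = g * (h' * b * h'⁻¹) * g⁻¹ by group,
              nb, gab]
          · rw [show g * h' * (a * b) * (g * h')⁻¹ = g * (h' * (a * b) * h'⁻¹) * g⁻¹ by group,
              m, k]
        · exact absurd (cinj h' _ _ (n.trans m.symm)) (Ne.symm hca)
        · -- h' : a→ab, ab→b, b→a : direction 2
          have nb : h' * b * h'⁻¹ = a := by rw [conjb h', n, m, hcba]
          exact done2 h' n m nb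
      · exact absurd m hh'
    · exact absurd (cinj g _ _ (h.trans k.symm)) hab1
    · -- g : a→b, b→ab, ab→a : direction 1
      have kc : g * (a * b) * g⁻¹ = a := by
        rw [gmul g, h, k, hbca]
      exact done1 g h k kc
  · -- g sends a to ab
    rcases habc g b (Or.inr (Or.inl rfl)) with k|k|k
    · -- g : a→ab, b→a, ab→b : direction 2
      have gab : g * (a * b) * g⁻¹ = b := by rw [gmul g, h, k, hcab2]
      exact done2 g h gab k
    · -- g = (a ab); find something moving b
      have gab : g * (a * b) * g⁻¹ = a := by rw [gmul g, h, k, hcba]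
      by_cases hC : ∀ g' : G, g' * b * g'⁻¹ = b
      · exact absurd hC (fun h' => (hcentral b hb1 h').elim)
      push_neg at hC
      obtain ⟨h', hh'⟩ := hC
      rcases habc h' b (Or.inr (Or.inl rfl)) with m|m|m
      · -- h' sends b to a
        rcases habc h' a (Or.inl rfl) with n|n|n
        · exact absurd (cinj h' _ _ (n.trans m.symm)) hab1
        · -- h' = (a b) : compose with g = (a ab)
          have hab' : h' * (a * b) * h'⁻¹ = a * b := by rw [gmul h', n, m, ← hco]
          refine done1 (g * h') ?_ ?_ ?_
          · rw [show g * h' * a * (g * h')⁻¹ = g * (h' * a * h'⁻¹) * g⁻¹ by group,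
              n, k]
          · rw [show g * h' * b * (g * h')⁻¹ = g * (h' * b * h'⁻¹) * g⁻¹ by group,
              m, h]
          · rw [show g * h' * (a * b) * (g * h')⁻¹ = g * (h' * (a * b) * h'⁻¹) * g⁻¹ by group,
              hab', gab]
        · -- h' : a→ab, b→a, ab→b : direction 2
          have hab' : h' * (a * b) * h'⁻¹ = b := by rw [gmul h', n, m, hcab2]
          exact done2 h' n hab' m
      · exact absurd m hh'
      · -- h' sends b to ab
        rcases habc h' a (Or.inl rfl) with n|n|n
        · -- h' = (b ab) : compose with g = (a ab)
          have hab' : h' * (a * b) * h'⁻¹ = b := by rw [gmul h', n, m, hacb]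
          refine done2 (g * h') ?_ ?_ ?_
          · rw [show g * h' * a * (g * h')⁻¹ = g * (h' * a * h'⁻¹) * g⁻¹ by group,
              n, h]
          · rw [show g * h' * (a * b) * (g * h')⁻¹ = g * (h' * (a * b) * h'⁻¹) * g⁻¹ by group,
              hab', k]
          · rw [show g * h' * b * (g * h')⁻¹ = g * (h' * b * h'⁻¹) * g⁻¹ by group,
              m, gab]
        · -- h' : a→b, b→ab, ab→a : direction 1
          have hab' : h' * (a * b) * h'⁻¹ = a := by rw [gmul h', n, m, hbca]
          exact done1 h' n m hab'
        · exact absurd (cinj h' _ _ (n.trans m.symm)) hab1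
    · exact absurd (cinj g _ _ (h.trans k.symm)) hab1
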